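/- Consider a single divisible item (m = 1) and n ≥ 2 players with weights b_i ≥ 1 and valuations v_i(x) = x (each player's value is the fraction of the item she receives). Let B = Σ_k b_k and for each i let B_{-i} = B − b_i. Then: (a) the allocation x*_i = b_i/B maximizes Π_i x_i^{b_i} over all x with x_i ≥ 0 and Σ_i x_i ≤ 1, and for each i the allocation (x*_{-i})_k = b_k/B_{-i} (for k ≠ i) maximizes Π_{k≠i} x_k^{b_k}; (b) the resulting Partial Allocation fraction satisfies f_i = (Π_{k≠i} (b_k/B)^{b_k} / Π_{k≠i} (b_k/B_{-i})^{b_k})^{1/b_i} = (1 + b_i/B_{-i})^{-B_{-i}/b_i} exactly. Hence the approximation bound (1 + b_i/B_{-i})^{-B_{-i}/b_i} of the Partial Allocation mechanism is tight. -/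

import Mathlib

open Finset

lemma key_max {ι : Type*} (s : Finset ι) (b x : ι → ℝ) (hb : ∀ i ∈ s, 0 < b i)
    (hx : ∀ i ∈ s, 0 ≤ x i) (hsum : ∑ i ∈ s, x i ≤ 1) :
    ∏ i ∈ s, x i ^ b i ≤ ∏ i ∈ s, (b i / ∑ k ∈ s, b k) ^ b i := by
  rcases s.eq_empty_or_nonempty with rfl | hne
  · simp
  set B : ℝ := ∑ k ∈ s, b k with hBdef
  have hB : 0 < B := Finset.sum_pos hb hne
  set w : ι → ℝ := fun i => b i / B with hwdef
  set z : ι → ℝ := fun i => x i * B / b i with hzdef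
  have hw : ∀ i ∈ s, 0 ≤ w i := fun i hi => div_nonneg (hb i hi).le hB.le
  have hw1 : ∑ i ∈ s, w i = 1 := by
    simp only [hwdef, ← Finset.sum_div]
    exact div_self hB.ne'
  have hz : ∀ i ∈ s, 0 ≤ z i := fun i hi =>
    div_nonneg (mul_nonneg (hx i hi) hB.le) (hb i hi).le
  have h1 : ∏ i ∈ s, z i ^ w i ≤ 1 := by
    refine le_trans (Real.geom_mean_le_arith_mean_weighted s w z hw hw1 hz) ?_
    refine le_trans (le_of_eq (Finset.sum_congr rfl fun i hi => ?_)) hsum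
    field_simp [hwdef, hzdef, hB.ne', (hb i hi).ne']
    simp only [hwdef, hzdef]
    field_simp
    exact mul_div_cancel_left₀ _ (hb i hi).ne'
  have hzb : ∏ i ∈ s, z i ^ b i ≤ 1 := by
    have h2 : (∏ i ∈ s, z i ^ w i) ^ B ≤ 1 :=
      Real.rpow_le_one (Finset.prod_nonneg fun i hi => Real.rpow_nonneg (hz i hi) _) h1 hB.le
    have h3 : (∏ i ∈ s, z i ^ w i) ^ B = ∏ i ∈ s, z i ^ b i := by
      rw [← Real.finset_prod_rpow s _ (fun i hi => Real.rpow_nonneg (hz i hi) _) B]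
      refine Finset.prod_congr rfl fun i hi => ?_
      rw [← Real.rpow_mul (hz i hi)]
      congr 1
      simp only [hwdef]
      exact div_mul_cancel₀ _ hB.ne'
    rwa [h3] at h2
  have hxeq : ∀ i ∈ s, x i = z i * (b i / B) := by
    intro i hi
    field_simp [hzdef, hB.ne', (hb i hi).ne']
    simp only [hzdef]
    rw [div_mul_cancel₀ _ (hb i hi).ne']
  calc ∏ i ∈ s, x i ^ b i
      = (∏ i ∈ s, z i ^ b i) * ∏ i ∈ s, (b i / B) ^ b i := by
        rw [← Finset.prod_mul_distrib]
        refine Finset.prod_congr rfl fun i hi => ?_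
        rw [hxeq i hi, Real.mul_rpow (hz i hi) (div_nonneg (hb i hi).le hB.le)]
    _ ≤ 1 * ∏ i ∈ s, (b i / B) ^ b i := by
        refine mul_le_mul_of_nonneg_right hzb ?_
        exact Finset.prod_nonneg fun i hi =>
          Real.rpow_nonneg (div_nonneg (hb i hi).le hB.le) _
    _ = ∏ i ∈ s, (b i / B) ^ b i := one_mul _

/-- Tightness of the Partial Allocation bound for a single item:
(a) the proportional allocations `b_i/B` (resp. `b_k/B_{-i}`) maximize the weighted Nash
products over feasible single-item allocations; (b) the resulting fraction `f_i` equals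
`(1 + b_i/B_{-i})^{-B_{-i}/b_i}` exactly. -/
theorem stmt_4 {n : ℕ} (hn : 2 ≤ n)
    (b : Fin n → ℝ) (hb : ∀ i, 1 ≤ b i) :
    (∀ x : Fin n → ℝ, (∀ i, 0 ≤ x i) → (∑ i, x i ≤ 1) →
      ∏ i, x i ^ b i ≤ ∏ i, (b i / ∑ k, b k) ^ b i) ∧
    (∀ i : Fin n, ∀ x : Fin n → ℝ, (∀ k, 0 ≤ x k) → (∑ k ∈ univ.erase i, x k ≤ 1) →
      ∏ k ∈ univ.erase i, x k ^ b k
        ≤ ∏ k ∈ univ.erase i, (b k / ((∑ l, b l) - b i)) ^ b k) ∧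
    (∀ i : Fin n,
      ((∏ k ∈ univ.erase i, (b k / ∑ l, b l) ^ b k) /
        (∏ k ∈ univ.erase i, (b k / ((∑ l, b l) - b i)) ^ b k)) ^ (1 / b i)
      = (1 + b i / ((∑ l, b l) - b i)) ^ (-(((∑ l, b l) - b i) / b i))) := by
  have hbpos : ∀ i, (0:ℝ) < b i := fun i => lt_of_lt_of_le one_pos (hb i)
  have hsub : ∀ i : Fin n, ∑ k ∈ univ.erase i, b k = (∑ l, b l) - b i := fun i =>
    Finset.sum_erase_eq_sub (Finset.mem_univ i)
  have hBi : ∀ i : Fin n, 0 < (∑ l, b l) - b i := by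
    intro i
    rw [← hsub i]
    refine Finset.sum_pos (fun k _ => hbpos k) ?_
    have : Nontrivial (Fin n) := Fin.nontrivial_iff_two_le.mpr hn
    obtain ⟨j, hj⟩ := exists_ne i
    exact ⟨j, Finset.mem_erase.mpr ⟨hj, Finset.mem_univ j⟩⟩
  have hB : ∀ i : Fin n, 0 < ∑ l, b l := fun i =>
    lt_of_lt_of_le (hBi i) (by linarith [hbpos i])
  refine ⟨?_, ?_, ?_⟩
  · intro x hx hsum
    exact key_max univ b x (fun i _ => hbpos i) (fun i _ => hx i) hsum
  · intro i x hx hsum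
    have := key_max (univ.erase i) b x (fun k _ => hbpos k) (fun k _ => hx k) hsum
    rwa [hsub i] at this
  · intro i
    have : Nontrivial (Fin n) := Fin.nontrivial_iff_two_le.mpr hn
    obtain ⟨j, hj⟩ : ∃ j, j ≠ i := exists_ne i
    set B : ℝ := ∑ l, b l
    set Bi : ℝ := B - b i
    have hBi' : 0 < Bi := hBi i
    have hB' : 0 < B := hB i
    have hratio : (∏ k ∈ univ.erase i, (b k / B) ^ b k) /
        (∏ k ∈ univ.erase i, (b k / Bi) ^ b k) = (Bi / B) ^ Bi := by
      rw [← Finset.prod_div_distrib]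
      have : ∀ k ∈ univ.erase i, (b k / B) ^ b k / (b k / Bi) ^ b k
          = (Bi / B) ^ b k := by
        intro k _
        rw [← Real.div_rpow (div_nonneg (hbpos k).le hB'.le)
          (div_nonneg (hbpos k).le hBi'.le)]
        congr 1
        field_simp [(hbpos k).ne', hB'.ne', hBi'.ne']
      rw [Finset.prod_congr rfl this, ← Real.rpow_sum_of_pos (div_pos hBi' hB') b,
        hsub i]
    rw [hratio, ← Real.rpow_mul (div_nonneg hBi'.le hB'.le)]
    have h1 : (1:ℝ) + b i / Bi = B / Bi := by field_simp; ring
    rw [h1, Real.rpow_neg (div_nonneg hB'.le hBi'.le), ← Real.inv_rpow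
      (div_nonneg hB'.le hBi'.le), inv_div]
    congr 1
    field_simp
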